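/- For every p ∈ [1/2, 1) and every η > 0, the standard normal cumulative distribution function satisfies Φ( Φ⁻¹(p) + η ) ≥ 1 − (1 − p) · √(π/2) · e^{−η²/2}. -/
import Mathlib

open MeasureTheory Metric Finset
open scoped ComplexOrder

noncomputable section

/-- Standard normal cumulative distribution function. -/
def stdPhi (x : ℝ) : ℝ := ∫ u in Set.Iic x, Real.exp (-u ^ 2 / 2) / Real.sqrt (2 * Real.pi)

open Classical in
/-- Inverse of the standard normal CDF (defined via choice; on `(0,1)` it is the
genuine inverse since `stdPhi` is a strictly monotone bijection onto `(0,1)`). -/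
def stdPhiInv (p : ℝ) : ℝ := if h : ∃ x, stdPhi x = p then h.choose else 0

namespace StdPhiAux

/-- The standard normal density. -/
def g (u : ℝ) : ℝ := Real.exp (-u ^ 2 / 2) / Real.sqrt (2 * Real.pi)

lemma g_pos (u : ℝ) : 0 < g u :=
  div_pos (Real.exp_pos _) (Real.sqrt_pos.2 (by positivity))

lemma g_integrable : Integrable g := by
  have h : Integrable (fun u : ℝ => Real.exp (-(1/2 : ℝ) * u ^ 2)) :=
    integrable_exp_neg_mul_sq (by norm_num)
  have := h.div_const (Real.sqrt (2 * Real.pi))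
  refine this.congr ?_
  filter_upwards with u
  simp [g]
  ring_nf

lemma g_total : ∫ u, g u = 1 := by
  have h : ∫ u : ℝ, Real.exp (-(1/2 : ℝ) * u ^ 2) = Real.sqrt (Real.pi / (1/2)) :=
    integral_gaussian (1/2)
  have h2 : (fun u : ℝ => g u) = fun u => Real.exp (-(1/2 : ℝ) * u ^ 2) / Real.sqrt (2 * Real.pi) := by
    funext u; simp [g]; ring_nf
  have hs : Real.sqrt (Real.pi / (1/2)) = Real.sqrt (2 * Real.pi) := by norm_num; ring_nf
  rw [h2, integral_div, h, hs, div_self (by positivity)]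

lemma stdPhi_eq (x : ℝ) : stdPhi x = ∫ u in Set.Iic x, g u := rfl

lemma tail_eq (x : ℝ) : ∫ u in Set.Ioi x, g u = 1 - stdPhi x := by
  have := intervalIntegral.integral_Iic_add_Ioi (b := x) (f := g) (μ := volume)
    g_integrable.integrableOn g_integrable.integrableOn
  rw [g_total] at this
  rw [stdPhi_eq]; linarith

lemma stdPhi_strictMono : StrictMono stdPhi := by
  intro a b hab
  have hsub : stdPhi b - stdPhi a = ∫ u in a..b, g u :=
    intervalIntegral.integral_Iic_sub_Iic g_integrable.integrableOn g_integrable.integrableOn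
  have hpos : 0 < ∫ u in a..b, g u := by
    apply intervalIntegral.intervalIntegral_pos_of_pos_on
      g_integrable.intervalIntegrable (fun x _ => g_pos x) hab
  linarith

lemma stdPhi_continuous : Continuous stdPhi := by
  have h : Continuous fun b => ∫ u in (0:ℝ)..b, g u :=
    g_integrable.continuous_primitive 0
  have heq : ∀ b, stdPhi b = stdPhi 0 + ∫ u in (0:ℝ)..b, g u := by
    intro b
    have := intervalIntegral.integral_Iic_sub_Iic (a := (0:ℝ)) (b := b) (f := g) (μ := volume)
      g_integrable.integrableOn g_integrable.integrableOn
    rw [stdPhi_eq, stdPhi_eq]; linarith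
  exact (continuous_const.add h).congr fun b => (heq b).symm

lemma stdPhi_zero : stdPhi 0 = 1/2 := by
  have hsymm : ∫ u in Set.Iic (0:ℝ), g u = ∫ u in Set.Ioi (0:ℝ), g u := by
    have := integral_comp_neg_Iic (0:ℝ) g
    rw [neg_zero] at this
    rw [← this]
    congr 1
    funext u; simp [g]
  have htail := tail_eq 0
  rw [stdPhi_eq] at *
  linarith [hsymm, htail]

lemma stdPhi_tendsto : Filter.Tendsto stdPhi Filter.atTop (nhds 1) := by
  have h : Filter.Tendsto (fun b => ∫ u in (0:ℝ)..b, g u) Filter.atTop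
      (nhds (∫ u in Set.Ioi (0:ℝ), g u)) :=
    intervalIntegral_tendsto_integral_Ioi 0 g_integrable.integrableOn Filter.tendsto_id
  have heq : ∀ b, stdPhi b = stdPhi 0 + ∫ u in (0:ℝ)..b, g u := by
    intro b
    have := intervalIntegral.integral_Iic_sub_Iic (a := (0:ℝ)) (b := b) (f := g) (μ := volume)
      g_integrable.integrableOn g_integrable.integrableOn
    rw [stdPhi_eq, stdPhi_eq]; linarith
  have htail := tail_eq 0
  have : Filter.Tendsto (fun b => stdPhi 0 + ∫ u in (0:ℝ)..b, g u) Filter.atTop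
      (nhds (stdPhi 0 + ∫ u in Set.Ioi (0:ℝ), g u)) := tendsto_const_nhds.add h
  have : Filter.Tendsto stdPhi Filter.atTop
      (nhds (stdPhi 0 + ∫ u in Set.Ioi (0:ℝ), g u)) := this.congr fun b => (heq b).symm
  convert this using 2
  rw [stdPhi_eq] at htail ⊢
  linarith

end StdPhiAux

open StdPhiAux in
/-- Gaussian CDF tail estimate `Φ(Φ⁻¹(p) + η) ≥ 1 - (1-p)√(π/2)e^{-η²/2}`. -/
theorem stmt11 (p η : ℝ) (hp : p ∈ Set.Ico (1/2 : ℝ) 1) (hη : 0 < η) :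
    1 - (1 - p) * Real.sqrt (Real.pi / 2) * Real.exp (-η ^ 2 / 2)
      ≤ stdPhi (stdPhiInv p + η) := by
  obtain ⟨hp1, hp2⟩ := hp
  -- existence of a point where stdPhi = p
  have hex : ∃ x, stdPhi x = p := by
    have hev : ∀ᶠ b in Filter.atTop, p < stdPhi b :=
      stdPhi_tendsto.eventually (eventually_gt_nhds hp2)
    obtain ⟨b, hb⟩ := hev.exists
    have := intermediate_value_univ (a := (0:ℝ)) (b := b) stdPhi_continuous
      (Set.mem_Icc.2 ⟨by rw [stdPhi_zero]; exact hp1, le_of_lt hb⟩)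
    exact this
  classical
  rw [stdPhiInv, dif_pos hex]
  set x := hex.choose with hxdef
  have hx : stdPhi x = p := hex.choose_spec
  have hx0 : 0 ≤ x := by
    by_contra h
    push_neg at h
    have := stdPhi_strictMono h
    rw [hx, stdPhi_zero] at this
    linarith
  -- translate the tail integral
  have hkey : ∫ u in Set.Ioi (x + η), g u = ∫ v in Set.Ioi x, g (v + η) := by
    have hmp : MeasurePreserving (fun v : ℝ => v + η) volume volume :=
      measurePreserving_add_right volume η
    have hme : MeasurableEmbedding (fun v : ℝ => v + η) :=
      (Homeomorph.addRight η).isClosedEmbedding.measurableEmbedding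
    have hpre : (fun v : ℝ => v + η) ⁻¹' Set.Ioi (x + η) = Set.Ioi x := by
      ext v; simp
    rw [← hmp.setIntegral_preimage_emb hme g (Set.Ioi (x + η)), hpre]
  -- pointwise bound on the shifted density
  have hbound : ∫ v in Set.Ioi x, g (v + η)
      ≤ ∫ v in Set.Ioi x, Real.exp (-η ^ 2 / 2) * g v := by
    apply setIntegral_mono_on
    · have : IntegrableOn (fun u => g u) (Set.Ioi (x+η)) := g_integrable.integrableOn
      have h2 := hkey
      -- integrability of shifted function
      exact (((measurePreserving_add_right volume η).integrable_comp_emb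
        ((Homeomorph.addRight η).isClosedEmbedding.measurableEmbedding)).2
        g_integrable).integrableOn
    · exact (g_integrable.const_mul _).integrableOn
    · exact measurableSet_Ioi
    · intro v hv
      have hvx : x < v := hv
      have hv0 : 0 ≤ v := le_trans hx0 (le_of_lt hvx)
      simp only [g]
      rw [← mul_div_assoc, ← Real.exp_add]
      gcongr
      nlinarith
  have htail1 : ∫ u in Set.Ioi (x + η), g u = 1 - stdPhi (x + η) := tail_eq _
  have htail2 : ∫ u in Set.Ioi x, g u = 1 - p := by rw [tail_eq, hx]
  have hconst : ∫ v in Set.Ioi x, Real.exp (-η ^ 2 / 2) * g v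
      = Real.exp (-η ^ 2 / 2) * (1 - p) := by
    rw [integral_const_mul, htail2]
  have hstep : 1 - stdPhi (x + η) ≤ Real.exp (-η ^ 2 / 2) * (1 - p) := by
    rw [← htail1, hkey, ← hconst]; exact hbound
  have hsqrt : (1:ℝ) ≤ Real.sqrt (Real.pi / 2) := by
    rw [show (1:ℝ) = Real.sqrt 1 by simp]
    apply Real.sqrt_le_sqrt
    linarith [Real.pi_gt_three]
  have hp' : 0 ≤ 1 - p := by linarith
  have hexp : 0 < Real.exp (-η ^ 2 / 2) := Real.exp_pos _
  nlinarith [mul_le_mul_of_nonneg_left hsqrt (mul_nonneg hp' hexp.le)]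

end
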